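/- arXiv:1203.6047 — 3 statements merged into one kernel-verified Lean document; each statement's English description precedes it below -/
import Mathlib

section
/- There exists a Polish group G with the following properties: (i) G is not locally compact; (ii) G admits a compatible complete left-invariant metric (G is Weil complete); (iii) there is a sequence (gₙ) in G converging to the identity whose terms freely generate a non-abelian free subgroup of G and such that for each n the subgroup generated by g₁,…,gₙ is discrete (G has a free subgroup at 1); and (iv) G has an open subgroup U such that the conjugates fUf⁻¹, for f ∈ G, form a neighbourhood basis at the identity. -/
noncomputable section

namespace St13

/-- The "lamp" group: free group on ℕ. -/
abbrev F := FreeGroup ℕ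

/-- Functions ℤ → F with support bounded below. -/
def L : Subgroup (ℤ → F) where
  carrier := {f | ∃ m : ℤ, ∀ k < m, f k = 1}
  one_mem' := ⟨0, fun _ _ => rfl⟩
  mul_mem' := by
    rintro f g ⟨m, hm⟩ ⟨m', hm'⟩
    exact ⟨min m m', fun k hk => by
      have h1 := hm k (lt_of_lt_of_le hk (min_le_left _ _))
      have h2 := hm' k (lt_of_lt_of_le hk (min_le_right _ _))
      simp [Pi.mul_apply, h1, h2]⟩
  inv_mem' := by
    rintro f ⟨m, hm⟩
    exact ⟨m, fun k hk => by simp [Pi.inv_apply, hm k hk]⟩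

/-- Shift a function up by `s`. -/
def sh (s : ℤ) (f : ℤ → F) : ℤ → F := fun k => f (k - s)

lemma sh_mem {s : ℤ} {f : ℤ → F} (hf : f ∈ L) : sh s f ∈ L := by
  obtain ⟨m, hm⟩ := hf
  exact ⟨m + s, fun k hk => hm (k - s) (by omega)⟩

/-- Shift on L. -/
def shL (s : ℤ) (g : L) : L := ⟨sh s g.val, sh_mem g.2⟩

@[simp] lemma shL_val (s : ℤ) (g : L) (k : ℤ) : (shL s g).val k = g.val (k - s) := rfl

lemma shL_mul (s : ℤ) (g h : L) : shL s (g * h) = shL s g * shL s h := by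
  apply Subtype.ext; funext k; rfl

lemma shL_inv (s : ℤ) (g : L) : shL s g⁻¹ = (shL s g)⁻¹ := by
  apply Subtype.ext; funext k; rfl

lemma shL_shL (s t : ℤ) (g : L) : shL s (shL t g) = shL (s + t) g := by
  apply Subtype.ext; funext k
  show g.val (k - s - t) = g.val (k - (s + t))
  have h : k - s - t = k - (s + t) := by ring
  rw [h]

@[simp] lemma shL_zero (g : L) : shL 0 g = g := by
  apply Subtype.ext; funext k
  show g.val (k - 0) = g.val k
  rw [sub_zero]

@[simp] lemma shL_one (s : ℤ) : shL s (1 : L) = 1 := by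
  apply Subtype.ext; funext k; rfl

/-- The group `G = L ⋊ ℤ` (shift action). -/
structure GG where
  g : L
  t : ℤ

namespace GG

@[ext] lemma ext' {x y : GG} (h1 : x.g = y.g) (h2 : x.t = y.t) : x = y := by
  cases x; cases y; simp_all

instance : Group GG where
  mul x y := ⟨x.g * shL x.t y.g, x.t + y.t⟩
  one := ⟨1, 0⟩
  inv x := ⟨shL (-x.t) x.g⁻¹, -x.t⟩
  mul_assoc x y z := by
    refine ext' ?_ (by show x.t + y.t + z.t = x.t + (y.t + z.t); ring)
    show (x.g * shL x.t y.g) * shL (x.t + y.t) z.g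
        = x.g * shL x.t (y.g * shL y.t z.g)
    rw [shL_mul, shL_shL, mul_assoc]
  one_mul x := by
    refine ext' ?_ (by show 0 + x.t = x.t; ring)
    show 1 * shL 0 x.g = x.g
    rw [shL_zero, one_mul]
  mul_one x := by
    refine ext' ?_ (by show x.t + 0 = x.t; ring)
    show x.g * shL x.t 1 = x.g
    rw [shL_one, mul_one]
  inv_mul_cancel x := by
    refine ext' ?_ (by show -x.t + x.t = 0; ring)
    show shL (-x.t) x.g⁻¹ * shL (-x.t) x.g = 1
    rw [← shL_mul, inv_mul_cancel, shL_one]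

@[simp] lemma mul_g (x y : GG) : (x * y).g = x.g * shL x.t y.g := rfl
@[simp] lemma mul_t (x y : GG) : (x * y).t = x.t + y.t := rfl
@[simp] lemma inv_g (x : GG) : (x⁻¹).g = shL (-x.t) x.g⁻¹ := rfl
@[simp] lemma inv_t (x : GG) : (x⁻¹).t = -x.t := rfl
@[simp] lemma one_g : (1 : GG).g = 1 := rfl
@[simp] lemma one_t : (1 : GG).t = 0 := rfl

end GG

/-! ## Numeric weight functions -/

def w1 (k : ℤ) : ℝ := min 1 ((2:ℝ) ^ (-k))

def m2 (x : ℤ) : ℝ := min 2 (max 0 (x:ℝ))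

def Wt (u k : ℤ) : ℝ := 2 * m2 (min 0 u - k) + min (w1 k) (w1 (k - u))

def sig (s t : ℤ) : ℤ := |s| + |t| - |s + t|

lemma w1_pos (k : ℤ) : 0 < w1 k := lt_min one_pos (zpow_pos (by norm_num) _)

lemma w1_nonneg (k : ℤ) : 0 ≤ w1 k := (w1_pos k).le

lemma w1_le_one (k : ℤ) : w1 k ≤ 1 := min_le_left _ _

lemma w1_anti {j k : ℤ} (h : j ≤ k) : w1 k ≤ w1 j :=
  min_le_min le_rfl (zpow_le_zpow_right₀ (by norm_num) (by omega))

lemma w1_eq_one {k : ℤ} (h : k ≤ 0) : w1 k = 1 :=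
  min_eq_left (one_le_zpow₀ (by norm_num) (by omega))

lemma m2_nonneg (x : ℤ) : 0 ≤ m2 x := le_min (by norm_num) (le_max_left _ _)

lemma m2_le_two (x : ℤ) : m2 x ≤ 2 := min_le_left _ _

lemma m2_mono {x y : ℤ} (h : x ≤ y) : m2 x ≤ m2 y :=
  min_le_min le_rfl (max_le_max le_rfl (by exact_mod_cast h))

lemma m2_eq_zero {x : ℤ} (h : x ≤ 0) : m2 x = 0 := by
  unfold m2
  rw [max_eq_left (by exact_mod_cast h : (x:ℝ) ≤ 0), min_eq_right (by norm_num)]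

lemma m2_add {x c : ℤ} (hc : 0 ≤ c) : m2 (x + c) ≤ m2 x + min 2 (c:ℝ) := by
  have hc' : (0:ℝ) ≤ (c:ℝ) := by exact_mod_cast hc
  unfold m2
  push_cast
  simp only [min_def, max_def]
  split_ifs <;> linarith

lemma sig_nonneg (s t : ℤ) : 0 ≤ sig s t := by
  unfold sig
  have := abs_add_le s t
  omega

lemma Wt_nonneg (u k : ℤ) : 0 ≤ Wt u k := by
  unfold Wt
  have := m2_nonneg (min 0 u - k)
  have := le_min (w1_nonneg k) (w1_nonneg (k - u))
  linarith

lemma Wt_le_five (u k : ℤ) : Wt u k ≤ 5 := by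
  unfold Wt
  have := m2_le_two (min 0 u - k)
  have h2 : min (w1 k) (w1 (k - u)) ≤ 1 := le_trans (min_le_left _ _) (w1_le_one k)
  linarith

lemma sig_mixed {s t : ℤ} (hs : s < 0) (ht : 0 < t) : sig s t = 2 * min (-s) t := by
  unfold sig
  rcases abs_cases s with ⟨h1,h2⟩|⟨h1,h2⟩ <;> rcases abs_cases t with ⟨h3,h4⟩|⟨h3,h4⟩ <;>
    rcases abs_cases (s+t) with ⟨h5,h6⟩|⟨h5,h6⟩ <;> omega

lemma fine_le_one (u k : ℤ) : min (w1 k) (w1 (k - u)) ≤ 1 :=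
  le_trans (min_le_left _ _) (w1_le_one k)

lemma fine_nonneg (u k : ℤ) : 0 ≤ min (w1 k) (w1 (k - u)) :=
  le_min (w1_nonneg k) (w1_nonneg (k - u))

lemma key1 (s t k : ℤ) : Wt (s+t) k ≤ Wt s k + (sig s t : ℝ) := by
  have hsig : (0:ℝ) ≤ (sig s t : ℝ) := by exact_mod_cast sig_nonneg s t
  rcases le_or_gt t 0 with ht | ht
  · have hmain : m2 (min 0 (s+t) - k) ≤ m2 (min 0 s - k) := m2_mono (by omega)
    have hfine : min (w1 k) (w1 (k - (s+t))) ≤ min (w1 k) (w1 (k - s)) :=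
      min_le_min le_rfl (w1_anti (by omega))
    unfold Wt; linarith
  rcases le_or_gt 0 s with hs0 | hs0
  · have hmain : min 0 (s+t) - k = min 0 s - k := by omega
    have hfineR : min (w1 k) (w1 (k - s)) = w1 k :=
      min_eq_left (w1_anti (by omega : k - s ≤ k))
    have hfineL : min (w1 k) (w1 (k - (s+t))) ≤ w1 k := min_le_left _ _
    unfold Wt; rw [hmain, hfineR]; linarith
  · set c := min (-s) t with hc
    have hc1 : 1 ≤ c := by omega
    have hcR : (1:ℝ) ≤ (c:ℝ) := by exact_mod_cast hc1
    have hmin0 : min 0 (s+t) = s + c := by omega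
    have hsig2 : (sig s t : ℝ) = 2 * (c:ℝ) := by
      have h := sig_mixed hs0 ht
      rw [hc]; exact_mod_cast h
    rcases le_or_gt k s with hk | hk
    · have hfineL : min (w1 k) (w1 (k - (s+t))) ≤ 1 := fine_le_one _ _
      have hfineR : min (w1 k) (w1 (k - s)) = 1 := by
        rw [w1_eq_one (by omega : k ≤ 0), w1_eq_one (by omega : k - s ≤ 0)]
        simp
      have hmain : m2 (min 0 (s+t) - k) ≤ m2 (min 0 s - k) + min 2 (c:ℝ) := by
        rw [hmin0]
        have h1 : s + c - k = (min 0 s - k) + c := by omega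
        rw [h1]
        exact m2_add (by omega)
      have hminc : min 2 (c:ℝ) ≤ (c:ℝ) := by
        rcases le_total (2:ℝ) (c:ℝ) with h|h
        · rw [min_eq_left h]; linarith
        · rw [min_eq_right h]
      unfold Wt; rw [hfineR]; linarith
    · have hmainL : m2 (min 0 (s+t) - k) ≤ (c:ℝ) - 1 := by
        rw [hmin0]
        refine le_trans (m2_mono (by omega : s + c - k ≤ c - 1)) ?_
        unfold m2
        refine le_trans (min_le_right _ _) ?_
        rw [max_eq_right (by push_cast; linarith : (0:ℝ) ≤ ((c - 1 : ℤ):ℝ))]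
        push_cast; linarith
      have hmainR : 0 ≤ m2 (min 0 s - k) := m2_nonneg _
      have hfineL : min (w1 k) (w1 (k - (s+t))) ≤ 1 := fine_le_one _ _
      have hfineR : 0 ≤ min (w1 k) (w1 (k - s)) := fine_nonneg _ _
      unfold Wt; linarith

lemma key2 (s t k : ℤ) : Wt (s+t) (k+s) ≤ Wt t k + (sig s t : ℝ) := by
  have hsig : (0:ℝ) ≤ (sig s t : ℝ) := by exact_mod_cast sig_nonneg s t
  have harg : k + s - (s + t) = k - t := by ring
  rcases le_or_gt 0 s with hs | hs
  · have hmain : m2 (min 0 (s+t) - (k+s)) ≤ m2 (min 0 t - k) := m2_mono (by omega)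
    have hfine : min (w1 (k+s)) (w1 (k+s - (s+t))) ≤ min (w1 k) (w1 (k - t)) := by
      rw [harg]; exact min_le_min (w1_anti (by omega)) le_rfl
    unfold Wt; linarith
  rcases le_or_gt t 0 with ht | ht
  · have hmain : m2 (min 0 (s+t) - (k+s)) = m2 (min 0 t - k) := by congr 1; omega
    have hfineR : min (w1 k) (w1 (k - t)) = w1 (k - t) :=
      min_eq_right (w1_anti (by omega : k ≤ k - t))
    have hfineL : min (w1 (k+s)) (w1 (k+s - (s+t))) ≤ w1 (k - t) := by
      rw [harg]; exact min_le_right _ _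
    unfold Wt; rw [hmain, hfineR]; linarith
  · set c := min (-s) t with hc
    have hc1 : 1 ≤ c := by omega
    have hcR : (1:ℝ) ≤ (c:ℝ) := by exact_mod_cast hc1
    have hmin0 : min 0 (s+t) = s + c := by omega
    have hmin0t : min 0 t = 0 := by omega
    have hsig2 : (sig s t : ℝ) = 2 * (c:ℝ) := by
      have h := sig_mixed hs ht
      rw [hc]; exact_mod_cast h
    rcases le_or_gt k 0 with hk | hk
    · have hfineL : min (w1 (k+s)) (w1 (k+s - (s+t))) ≤ 1 := fine_le_one _ _
      have hfineR : min (w1 k) (w1 (k - t)) = 1 := by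
        rw [w1_eq_one (by omega : k ≤ 0), w1_eq_one (by omega : k - t ≤ 0)]; simp
      have hmain : m2 (min 0 (s+t) - (k+s)) ≤ m2 (min 0 t - k) + min 2 (c:ℝ) := by
        rw [hmin0, hmin0t]
        have h1 : s + c - (k + s) = (0 - k) + c := by ring
        rw [h1]
        exact m2_add (by omega)
      have hminc : min 2 (c:ℝ) ≤ (c:ℝ) := by
        rcases le_total (2:ℝ) (c:ℝ) with h|h
        · rw [min_eq_left h]; linarith
        · rw [min_eq_right h]
      unfold Wt; rw [hfineR]; linarith
    · have hmainL : m2 (min 0 (s+t) - (k+s)) ≤ (c:ℝ) - 1 := by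
        rw [hmin0]
        refine le_trans (m2_mono (by omega : s + c - (k+s) ≤ c - 1)) ?_
        unfold m2
        refine le_trans (min_le_right _ _) ?_
        rw [max_eq_right (by push_cast; linarith : (0:ℝ) ≤ ((c - 1 : ℤ):ℝ))]
        push_cast; linarith
      have hmainR : 0 ≤ m2 (min 0 t - k) := m2_nonneg _
      have hfineL : min (w1 (k+s)) (w1 (k+s - (s+t))) ≤ 1 := fine_le_one _ _
      have hfineR : 0 ≤ min (w1 k) (w1 (k - t)) := fine_nonneg _ _
      unfold Wt; linarith

lemma Wt_inv_arg (t k : ℤ) : Wt (-t) (k - t) = Wt t k := by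
  unfold Wt
  have h1 : min 0 (-t) - (k - t) = min 0 t - k := by omega
  have h2 : k - t - -t = k := by ring
  rw [h1, h2, min_comm (w1 (k - t)) (w1 k)]

lemma Wt_zero (k : ℤ) (hk : 0 ≤ k) : Wt 0 k = w1 k := by
  unfold Wt
  have h1 : min 0 0 - k ≤ 0 := by omega
  rw [m2_eq_zero h1, sub_zero, min_self]
  ring

lemma Wt_zero_ge (k : ℤ) : w1 k ≤ Wt 0 k := by
  unfold Wt
  have h := m2_nonneg (min 0 0 - k)
  have h2 : min (w1 k) (w1 (k - 0)) = w1 k := by rw [sub_zero, min_self]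
  rw [h2]
  linarith

/-! ## The sup-over-support functional -/

def Phi (g : L) (w : ℤ → ℝ) : ℝ := sSup (insert 0 (w '' {k : ℤ | g.val k ≠ 1}))

lemma Phi_ub {g : L} {w : ℤ → ℝ} {C : ℝ} (hC : ∀ k, w k ≤ C) :
    BddAbove (insert (0:ℝ) (w '' {k : ℤ | g.val k ≠ 1})) := by
  refine ⟨max C 0, fun x hx => ?_⟩
  rcases Set.mem_insert_iff.mp hx with rfl | ⟨k, _, rfl⟩
  · exact le_max_right _ _
  · exact le_trans (hC k) (le_max_left _ _)

lemma Phi_nonneg {g : L} {w : ℤ → ℝ} {C : ℝ} (hC : ∀ k, w k ≤ C) : 0 ≤ Phi g w :=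
  le_csSup (Phi_ub hC) (Set.mem_insert _ _)

lemma le_Phi {g : L} {w : ℤ → ℝ} {C : ℝ} (hC : ∀ k, w k ≤ C) {k : ℤ}
    (hk : g.val k ≠ 1) : w k ≤ Phi g w :=
  le_csSup (Phi_ub hC) (Set.mem_insert_of_mem _ ⟨k, hk, rfl⟩)

lemma Phi_le {g : L} {w : ℤ → ℝ} {c : ℝ} (hc : 0 ≤ c)
    (h : ∀ k, g.val k ≠ 1 → w k ≤ c) : Phi g w ≤ c := by
  apply csSup_le (Set.insert_nonempty _ _)
  rintro x hx
  rcases Set.mem_insert_iff.mp hx with rfl | ⟨k, hk, rfl⟩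
  · exact hc
  · exact h k hk

lemma Phi_one (w : ℤ → ℝ) : Phi 1 w = 0 := by
  have h : {k : ℤ | (1:L).val k ≠ 1} = ∅ := by
    ext k; simp
  unfold Phi
  rw [h, Set.image_empty]
  simp

lemma Phi_congr {g : L} {w w' : ℤ → ℝ} (h : ∀ k, w k = w' k) : Phi g w = Phi g w' := by
  unfold Phi
  rw [funext h]

lemma Phi_mono_add {g : L} {w w' : ℤ → ℝ} {c C : ℝ} (hc : 0 ≤ c) (hC' : ∀ k, w' k ≤ C)
    (h : ∀ k, w k ≤ w' k + c) : Phi g w ≤ Phi g w' + c :=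
  Phi_le (add_nonneg (Phi_nonneg hC') hc)
    (fun k hk => le_trans (h k) (add_le_add_left (le_Phi hC' hk) c))

lemma Phi_mul_le_max {g h : L} {w : ℤ → ℝ} {C : ℝ} (hC : ∀ k, w k ≤ C) :
    Phi (g * h) w ≤ max (Phi g w) (Phi h w) := by
  apply Phi_le (le_max_of_le_left (Phi_nonneg hC))
  intro k hk
  have hval : (g * h).val k = g.val k * h.val k := rfl
  by_cases hg : g.val k = 1
  · have hh : h.val k ≠ 1 := by
      intro hh; apply hk; rw [hval, hg, hh, mul_one]
    exact le_max_of_le_right (le_Phi hC hh)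
  · exact le_max_of_le_left (le_Phi hC hg)

lemma Phi_shift (s : ℤ) (g : L) (w : ℤ → ℝ) :
    Phi (shL s g) w = Phi g (fun k => w (k + s)) := by
  unfold Phi
  congr 1
  congr 1
  ext x
  constructor
  · rintro ⟨k, hk, rfl⟩
    refine ⟨k - s, hk, ?_⟩
    simp
  · rintro ⟨k, hk, rfl⟩
    refine ⟨k + s, ?_, rfl⟩
    have : (shL s g).val (k + s) = g.val k := by
      rw [shL_val]; congr 1; ring
    simpa [this] using hk

lemma Phi_inv (g : L) (w : ℤ → ℝ) : Phi g⁻¹ w = Phi g w := by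
  unfold Phi
  have h : {k : ℤ | (g⁻¹ : L).val k ≠ 1} = {k : ℤ | g.val k ≠ 1} := by
    ext k
    have : (g⁻¹ : L).val k = (g.val k)⁻¹ := rfl
    simp [this]
  rw [h]

/-! ## The norm on GG -/

def Nn (x : GG) : ℝ := |(x.t : ℝ)| + Phi x.g (Wt x.t)

lemma Nn_nonneg (x : GG) : 0 ≤ Nn x :=
  add_nonneg (abs_nonneg _) (Phi_nonneg (Wt_le_five x.t))

lemma Nn_one : Nn 1 = 0 := by
  unfold Nn
  rw [GG.one_t, GG.one_g, Phi_one]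
  norm_num

lemma abs_le_Nn (x : GG) : |(x.t : ℝ)| ≤ Nn x :=
  le_add_of_nonneg_right (Phi_nonneg (Wt_le_five x.t))

lemma Phi_le_Nn (x : GG) : Phi x.g (Wt x.t) ≤ Nn x :=
  le_add_of_nonneg_left (abs_nonneg _)

lemma Nn_eq_zero {x : GG} (h : Nn x = 0) : x = 1 := by
  have ht : x.t = 0 := by
    have h1 := abs_le_Nn x
    have h2 : |(x.t : ℝ)| = 0 := le_antisymm (h ▸ h1) (abs_nonneg _)
    exact_mod_cast abs_eq_zero.mp h2
  have hP : Phi x.g (Wt x.t) = 0 :=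
    le_antisymm (by have := abs_le_Nn x; have := abs_nonneg ((x.t : ℝ)); linarith [Phi_le_Nn x])
      (Phi_nonneg (Wt_le_five x.t))
  have hg : x.g = 1 := by
    apply Subtype.ext
    funext k
    by_contra hk
    have h1 : Wt x.t k ≤ Phi x.g (Wt x.t) := le_Phi (Wt_le_five x.t) hk
    have h2 : w1 k ≤ Wt x.t k := by
      rw [ht] at h1 ⊢
      exact le_trans (Wt_zero_ge k) le_rfl
    have := w1_pos k
    rw [ht] at hP
    rw [ht] at h1
    have h3 : w1 k ≤ Wt 0 k := Wt_zero_ge k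
    linarith
  exact GG.ext' hg ht

lemma Nn_inv (x : GG) : Nn x⁻¹ = Nn x := by
  unfold Nn
  rw [GG.inv_t, GG.inv_g, Phi_shift, Phi_inv]
  have h : (fun k => Wt (-x.t) (k + -x.t)) = Wt x.t := by
    funext k
    rw [← sub_eq_add_neg, Wt_inv_arg]
  rw [h, Int.cast_neg, abs_neg]

lemma Nn_mul (x y : GG) : Nn (x * y) ≤ Nn x + Nn y := by
  unfold Nn
  rw [GG.mul_t, GG.mul_g]
  have hsig : ((sig x.t y.t : ℤ) : ℝ) = |(x.t:ℝ)| + |(y.t:ℝ)| - |((x.t + y.t : ℤ):ℝ)| := by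
    unfold sig; push_cast; ring
  have h1 : Phi (x.g * shL x.t y.g) (Wt (x.t + y.t)) ≤
      max (Phi x.g (Wt (x.t + y.t))) (Phi (shL x.t y.g) (Wt (x.t + y.t))) :=
    Phi_mul_le_max (Wt_le_five _)
  have h2 : Phi x.g (Wt (x.t + y.t)) ≤ Phi x.g (Wt x.t) + (sig x.t y.t : ℝ) :=
    Phi_mono_add (by exact_mod_cast sig_nonneg x.t y.t) (Wt_le_five _)
      (fun k => key1 x.t y.t k)
  have h3 : Phi (shL x.t y.g) (Wt (x.t + y.t)) ≤ Phi y.g (Wt y.t) + (sig x.t y.t : ℝ) := by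
    rw [Phi_shift]
    exact Phi_mono_add (by exact_mod_cast sig_nonneg x.t y.t) (Wt_le_five _)
      (fun k => key2 x.t y.t k)
  have h4 : 0 ≤ Phi x.g (Wt x.t) := Phi_nonneg (Wt_le_five _)
  have h5 : 0 ≤ Phi y.g (Wt y.t) := Phi_nonneg (Wt_le_five _)
  have h6 := max_le (le_trans h2 (by linarith)) (le_trans h3 (by linarith)) (c := Phi x.g (Wt x.t) + Phi y.g (Wt y.t) + (sig x.t y.t : ℝ))
  push_cast at hsig ⊢
  linarith [le_trans h1 h6]

/-! ## Metric space structure -/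

@[simp] lemma Lval_mul (g h : L) (k : ℤ) : ((g * h : L)).val k = g.val k * h.val k := rfl
@[simp] lemma Lval_inv (g : L) (k : ℤ) : ((g⁻¹ : L)).val k = (g.val k)⁻¹ := rfl
@[simp] lemma Lval_one (k : ℤ) : ((1 : L)).val k = 1 := rfl

instance : MetricSpace GG where
  dist x y := Nn (x⁻¹ * y)
  dist_self x := by
    show Nn (x⁻¹ * x) = 0
    rw [inv_mul_cancel]; exact Nn_one
  dist_comm x y := by
    show Nn (x⁻¹ * y) = Nn (y⁻¹ * x)
    have h : (x⁻¹ * y)⁻¹ = y⁻¹ * x := by group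
    rw [← Nn_inv, h]
  dist_triangle x y z := by
    show Nn (x⁻¹ * z) ≤ Nn (x⁻¹ * y) + Nn (y⁻¹ * z)
    have h : x⁻¹ * z = (x⁻¹ * y) * (y⁻¹ * z) := by group
    rw [h]
    exact Nn_mul _ _
  eq_of_dist_eq_zero := by
    intro x y h
    have h1 : x⁻¹ * y = 1 := Nn_eq_zero h
    have h2 : y = x * (x⁻¹ * y) := by group
    rw [h2, h1, mul_one]

lemma dist_eq (x y : GG) : dist x y = Nn (x⁻¹ * y) := rfl

lemma dist_one (x : GG) : dist 1 x = Nn x := by rw [dist_eq, inv_one, one_mul]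

lemma dist_left_inv (g x y : GG) : dist (g * x) (g * y) = dist x y := by
  rw [dist_eq, dist_eq]
  congr 1
  group

/-- Elements with small norm lie in the basic subgroups. -/
lemma N_bset {x : GG} {m : ℤ} (h : Nn x < w1 m) : x.t = 0 ∧ ∀ k ≤ m, x.g.val k = 1 := by
  have ht : x.t = 0 := by
    have h1 : |(x.t:ℝ)| < 1 := lt_of_le_of_lt (abs_le_Nn x) (lt_of_lt_of_le h (w1_le_one m))
    have h2 : |x.t| < 1 := by
      rw [← Int.cast_abs] at h1
      exact_mod_cast h1
    rw [abs_lt] at h2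
    omega
  refine ⟨ht, fun k hk => ?_⟩
  by_contra hkne
  have hP : Wt x.t k ≤ Nn x := le_trans (le_Phi (Wt_le_five x.t) hkne) (Phi_le_Nn x)
  rw [ht] at hP
  have h3 : w1 k ≤ Wt 0 k := Wt_zero_ge k
  have h4 : w1 m ≤ w1 k := w1_anti hk
  linarith

/-- Elements in the basic subgroups have small norm. -/
lemma bset_N {x : GG} {m : ℤ} (hm : 0 ≤ m) (ht : x.t = 0)
    (hg : ∀ k < m, x.g.val k = 1) : Nn x ≤ w1 m := by
  unfold Nn
  rw [ht]
  have h0 : |((0:ℤ):ℝ)| = 0 := by norm_num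
  rw [h0, zero_add]
  apply Phi_le (w1_nonneg m)
  intro k hk
  have hkm : m ≤ k := by
    by_contra hcon
    exact hk (hg k (by omega))
  rw [Wt_zero k (by omega)]
  exact w1_anti hkm

/-- Conjugation shifts basic subgroups. -/
lemma conj_bset (f x : GG) (m : ℤ) (ht : x.t = 0) (hg : ∀ k < m, x.g.val k = 1) :
    (f * x * f⁻¹).t = 0 ∧ ∀ k < m + f.t, (f * x * f⁻¹).g.val k = 1 := by
  constructor
  · simp [ht]
  · intro k hk
    have hval : (f * x * f⁻¹).g.val k
        = f.g.val k * x.g.val (k - f.t) * (f.g.val (k - x.t))⁻¹ := by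
      simp only [GG.mul_g, GG.mul_t, GG.inv_g, GG.inv_t, Lval_mul, Lval_inv, shL_val]
      have h2 : k - (f.t + x.t) - -f.t = k - x.t := by ring
      rw [h2]
    rw [hval, ht, hg (k - f.t) (by omega), sub_zero, mul_one, mul_inv_cancel]

/-- Norm bound for conjugates of small elements. -/
lemma conj_norm (f x : GG) (m : ℤ) (hm : 0 ≤ m + f.t) (ht : x.t = 0)
    (hg : ∀ k < m, x.g.val k = 1) : Nn (f * x * f⁻¹) ≤ w1 (m + f.t) := by
  obtain ⟨h1, h2⟩ := conj_bset f x m ht hg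
  exact bset_N hm h1 h2

lemma exists_w1_lt {ε : ℝ} (hε : 0 < ε) : ∃ n : ℕ, w1 (n:ℤ) < ε := by
  obtain ⟨n, hn⟩ := exists_pow_lt_of_lt_one hε (by norm_num : (1:ℝ)/2 < 1)
  refine ⟨n, ?_⟩
  have h : (2:ℝ) ^ (-(n:ℤ)) = ((1:ℝ)/2) ^ n := by
    rw [zpow_neg, zpow_natCast, ← inv_pow, one_div]
  calc w1 (n:ℤ) ≤ (2:ℝ) ^ (-(n:ℤ)) := min_le_right _ _
    _ = ((1:ℝ)/2)^n := h
    _ < ε := hn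

instance : IsTopologicalGroup GG where
  continuous_mul := by
    rw [Metric.continuous_iff]
    rintro ⟨x, y⟩ ε hε
    obtain ⟨m₀, hm₀⟩ := exists_w1_lt (half_pos hε)
    set m : ℤ := (m₀ : ℤ) + |y.t| with hm
    have habs1 : -|y.t| ≤ y.t := neg_abs_le y.t
    have habs2 : y.t ≤ |y.t| := le_abs_self y.t
    refine ⟨min (w1 m) (ε/2), lt_min (w1_pos m) (half_pos hε), ?_⟩
    rintro ⟨a, b⟩ hab
    rw [Prod.dist_eq] at hab
    have ha : dist a x < min (w1 m) (ε/2) := lt_of_le_of_lt (le_max_left _ _) hab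
    have hb : dist b y < min (w1 m) (ε/2) := lt_of_le_of_lt (le_max_right _ _) hab
    have hu : Nn (x⁻¹ * a) < w1 m := by
      rw [dist_comm, dist_eq] at ha
      exact lt_of_lt_of_le ha (min_le_left _ _)
    obtain ⟨hut, hug⟩ := N_bset hu
    have hsplit : (x * y)⁻¹ * (a * b) = (y⁻¹ * (x⁻¹ * a) * y) * (y⁻¹ * b) := by group
    have hconj : Nn (y⁻¹ * (x⁻¹ * a) * (y⁻¹)⁻¹) ≤ w1 (m + (y⁻¹).t) := by
      apply conj_norm _ _ m _ hut (fun k hk => hug k (by omega))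
      simp only [GG.inv_t]
      omega
    have hconj2 : Nn (y⁻¹ * (x⁻¹ * a) * y) < ε/2 := by
      rw [inv_inv y] at hconj
      refine lt_of_le_of_lt hconj ?_
      refine lt_of_le_of_lt (w1_anti ?_) hm₀
      simp only [GG.inv_t]
      omega
    have hv : Nn (y⁻¹ * b) < ε/2 := by
      rw [dist_comm, dist_eq] at hb
      exact lt_of_lt_of_le hb (min_le_right _ _)
    show dist (a * b) (x * y) < ε
    rw [dist_comm, dist_eq, hsplit]
    calc Nn ((y⁻¹ * (x⁻¹ * a) * y) * (y⁻¹ * b))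
        ≤ Nn (y⁻¹ * (x⁻¹ * a) * y) + Nn (y⁻¹ * b) := Nn_mul _ _
      _ < ε/2 + ε/2 := add_lt_add hconj2 hv
      _ = ε := add_halves ε
  continuous_inv := by
    rw [Metric.continuous_iff]
    intro x ε hε
    obtain ⟨m₀, hm₀⟩ := exists_w1_lt hε
    set m : ℤ := (m₀ : ℤ) + |x.t| with hm
    have habs1 : -|x.t| ≤ x.t := neg_abs_le x.t
    have habs2 : x.t ≤ |x.t| := le_abs_self x.t
    refine ⟨w1 m, w1_pos m, ?_⟩
    intro a ha
    have hu : Nn (x⁻¹ * a) < w1 m := by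
      rw [dist_comm, dist_eq] at ha
      exact ha
    obtain ⟨hut, hug⟩ := N_bset hu
    have hconj : Nn (x * (x⁻¹ * a) * x⁻¹) ≤ w1 (m + x.t) :=
      conj_norm _ _ m (by omega) hut (fun k hk => hug k (by omega))
    have hsplit : (a⁻¹)⁻¹ * x⁻¹ = x * (x⁻¹ * a) * x⁻¹ := by group
    show dist a⁻¹ x⁻¹ < ε
    rw [dist_eq, hsplit]
    refine lt_of_le_of_lt hconj (lt_of_le_of_lt (w1_anti (by omega)) hm₀)

/-! ## Separability -/

instance : Countable F :=
  ⟨⟨fun w => Encodable.encode w.toWord,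
    fun _ _ h => FreeGroup.toWord_injective (Encodable.encode_injective h)⟩⟩

/-- Elements with finite support (bounded above too). -/
def Dset : Set GG := {x : GG | ∃ M : ℤ, ∀ k ≥ M, x.g.val k = 1}

/-- Encoding of finitely supported elements. -/
def enc (p : List F × ℤ × ℤ) : GG :=
  ⟨⟨fun k => if h : 0 ≤ k - p.2.1 ∧ (k - p.2.1).toNat < p.1.length
      then p.1.get ⟨(k - p.2.1).toNat, h.2⟩ else 1,
    ⟨p.2.1, fun k hk => dif_neg (by omega)⟩⟩, p.2.2⟩

lemma Dset_countable : Set.Countable Dset := by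
  apply Set.Countable.mono _ (Set.countable_range enc)
  rintro x ⟨M, hM⟩
  obtain ⟨m, hm⟩ := x.g.2
  rcases le_total M m with hMm | hMm
  · -- support empty: x.g = 1
    refine ⟨([], m, x.t), ?_⟩
    unfold enc
    apply GG.ext'
    · apply Subtype.ext
      funext k
      show (if h : 0 ≤ k - m ∧ (k - m).toNat < ([] : List F).length
        then ([] : List F).get ⟨(k - m).toNat, h.2⟩ else 1) = x.g.val k
      rw [dif_neg (by simp)]
      rcases lt_or_ge k m with h | h
      · exact (hm k h).symm
      · exact (hM k (by omega)).symm
    · rfl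
  · refine ⟨((List.range (M - m).toNat).map (fun i : ℕ => x.g.val (m + (i:ℤ))), m, x.t), ?_⟩
    unfold enc
    apply GG.ext'
    · apply Subtype.ext
      funext k
      set l := (List.range (M - m).toNat).map (fun i : ℕ => x.g.val (m + (i:ℤ))) with hl
      have hlen : l.length = (M - m).toNat := by
        rw [hl, List.length_map, List.length_range]
      show (if h : 0 ≤ k - m ∧ (k - m).toNat < l.length
        then l.get ⟨(k - m).toNat, h.2⟩ else 1) = x.g.val k
      by_cases h : 0 ≤ k - m ∧ (k - m).toNat < l.length
      · rw [dif_pos h]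
        have h2 := h.2
        rw [hlen] at h2
        have hval : l.get ⟨(k - m).toNat, h.2⟩ = x.g.val (m + ((k - m).toNat : ℤ)) := by
          simp only [hl, List.get_eq_getElem, List.getElem_map, List.getElem_range]
        have harg : m + ((k - m).toNat : ℤ) = k := by omega
        rw [hval, harg]
      · rw [dif_neg h]
        rw [hlen] at h
        push_neg at h
        rcases lt_or_ge k m with h3 | h3
        · exact (hm k h3).symm
        · have h4 := h (by omega)
          exact (hM k (by omega)).symm
    · rfl

lemma Dset_dense : Dense Dset := by
  rw [Metric.dense_iff]
  intro x r hr
  obtain ⟨m₀, hm₀⟩ := exists_w1_lt hr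
  set M : ℤ := (m₀ : ℤ) + x.t with hM
  obtain ⟨m, hm⟩ := x.g.2
  have hygmem : (fun k => if k < M then x.g.val k else 1) ∈ L := by
    refine ⟨m, fun k hk => ?_⟩
    show (if k < M then x.g.val k else 1) = 1
    by_cases h : k < M
    · rw [if_pos h]; exact hm k hk
    · rw [if_neg h]
  set y : GG := ⟨⟨fun k => if k < M then x.g.val k else 1, hygmem⟩, x.t⟩ with hy
  have hyt : y.t = x.t := rfl
  refine ⟨y, ?_, ⟨M, fun k hk => if_neg (by omega)⟩⟩
  rw [Metric.mem_ball, dist_comm, dist_eq]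
  have ht : ((x⁻¹ * y) : GG).t = 0 := by
    simp only [GG.mul_t, GG.inv_t, hyt]
    ring
  have hcoord : ∀ k, k < (m₀:ℤ) → ((x⁻¹ * y).g).val k = 1 := by
    intro k hk
    simp only [GG.mul_g, GG.inv_g, GG.inv_t, Lval_mul, Lval_inv, shL_val, hyt]
    have h1 : k - -x.t = k + x.t := by ring
    rw [h1]
    show (x.g.val (k + x.t))⁻¹ * (if k + x.t < M then x.g.val (k + x.t) else 1) = 1
    rw [if_pos (by omega), inv_mul_cancel]
  have hb := bset_N (by positivity) ht hcoord
  exact lt_of_le_of_lt hb hm₀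

instance : TopologicalSpace.SeparableSpace GG := ⟨⟨Dset, Dset_countable, Dset_dense⟩⟩

/-! ## Completeness -/

instance : CompleteSpace GG := by
  apply Metric.complete_of_cauchySeq_tendsto
  intro u hu
  rw [Metric.cauchySeq_iff] at hu
  choose! idx hidxs using hu
  set N₁ := idx 1 with hN₁
  have hN₁s : ∀ m ≥ N₁, ∀ n ≥ N₁, dist (u m) (u n) < 1 := hidxs 1 one_pos
  set c := (u N₁).t with hc
  have htc : ∀ n, N₁ ≤ n → (u n).t = c := by
    intro n hn
    have h := hN₁s N₁ le_rfl n hn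
    rw [dist_eq] at h
    have h1 : Nn ((u N₁)⁻¹ * u n) < w1 0 := by rwa [w1_eq_one le_rfl]
    obtain ⟨ht0, -⟩ := N_bset h1
    simp only [GG.mul_t, GG.inv_t] at ht0
    omega
  have agr : ∀ (M : ℤ) (m n : ℕ), N₁ ≤ m → N₁ ≤ n → idx (w1 M) ≤ m → idx (w1 M) ≤ n →
      ∀ j ≤ M + c, (u m).g.val j = (u n).g.val j := by
    intro M m n hm hn hm2 hn2 j hj
    have h := hidxs (w1 M) (w1_pos M) m hm2 n hn2
    rw [dist_eq] at h
    obtain ⟨ht0, hcoord⟩ := N_bset h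
    have h3 := hcoord (j - c) (by omega)
    simp only [GG.mul_g, GG.inv_g, GG.inv_t, Lval_mul, Lval_inv, shL_val] at h3
    have h4 : j - c - -(u m).t = j := by rw [htc m hm]; ring
    rw [h4] at h3
    exact inv_mul_eq_one.mp h3
  set h' : ℤ → ℕ := fun j => max N₁ (idx (w1 (j - c))) with hh'
  set lf : ℤ → F := fun j => (u (h' j)).g.val j with hlf
  have hstab : ∀ j : ℤ, ∀ n : ℕ, h' j ≤ n → (u n).g.val j = lf j := by
    intro j n hn
    exact (agr (j - c) (h' j) n (le_max_left _ _) (le_trans (le_max_left _ _) hn)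
      (le_max_right _ _) (le_trans (le_max_right _ _) hn) j (by omega)).symm
  have hunif : ∀ (M : ℤ) (n : ℕ), max N₁ (idx (w1 M)) ≤ n → ∀ j ≤ M + c,
      (u n).g.val j = lf j := by
    intro M n hn j hj
    have hp : (u (max n (h' j))).g.val j = lf j := hstab j _ (le_max_right _ _)
    have ha := agr M n (max n (h' j)) (le_trans (le_max_left _ _) hn)
      (le_trans (le_trans (le_max_left _ _) hn) (le_max_left _ _))
      (le_trans (le_max_right _ _) hn)
      (le_trans (le_trans (le_max_right _ _) hn) (le_max_left _ _)) j hj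
    rw [ha, hp]
  have hmem : lf ∈ L := by
    obtain ⟨m₂, hm₂⟩ := (u (max N₁ (idx (w1 0)))).g.2
    refine ⟨min m₂ c, fun k hk => ?_⟩
    have h := hunif 0 (max N₁ (idx (w1 0))) le_rfl k (by omega)
    rw [← h]
    exact hm₂ k (by omega)
  refine ⟨⟨⟨lf, hmem⟩, c⟩, ?_⟩
  rw [Metric.tendsto_atTop]
  intro ε hε
  obtain ⟨M₀, hM₀⟩ := exists_w1_lt hε
  refine ⟨max N₁ (idx (w1 (M₀:ℤ))), fun n hn => ?_⟩
  have htn : (u n).t = c := htc n (le_trans (le_max_left _ _) hn)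
  rw [dist_eq]
  have ht0 : (((u n)⁻¹ * ⟨⟨lf, hmem⟩, c⟩ : GG)).t = 0 := by
    simp only [GG.mul_t, GG.inv_t]
    rw [htn]
    ring
  have hco : ∀ k, k < (M₀:ℤ) → (((u n)⁻¹ * ⟨⟨lf, hmem⟩, c⟩ : GG)).g.val k = 1 := by
    intro k hk
    simp only [GG.mul_g, GG.inv_g, GG.inv_t, Lval_mul, Lval_inv, shL_val]
    show ((u n).g.val (k - -(u n).t))⁻¹ * lf (k - -(u n).t) = 1
    rw [hunif (M₀:ℤ) n hn (k - -(u n).t) (by omega)]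
    exact inv_mul_cancel _
  have hb := bset_N (by positivity) ht0 hco
  exact lt_of_le_of_lt hb hM₀

example : PolishSpace GG := inferInstance

/-! ## Not locally compact -/

lemma mul_val_t0 {x y : GG} (hx : x.t = 0) (k : ℤ) :
    (x⁻¹ * y).g.val k = (x.g.val k)⁻¹ * y.g.val k := by
  simp only [GG.mul_g, GG.inv_g, GG.inv_t, Lval_mul, Lval_inv, shL_val, hx]
  norm_num

def pt (m : ℕ) (i : ℕ) : GG :=
  ⟨⟨fun k => if k = (m:ℤ) then FreeGroup.of i else 1,
    ⟨0, fun k hk => if_neg (by omega)⟩⟩, 0⟩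

lemma pt_t (m i : ℕ) : (pt m i).t = 0 := rfl
lemma pt_val (m i : ℕ) (k : ℤ) :
    (pt m i).g.val k = if k = (m:ℤ) then FreeGroup.of i else 1 := rfl

lemma not_locally_compact : ¬ LocallyCompactSpace GG := by
  intro h
  obtain ⟨K, hK, -, hKc⟩ := h.local_compact_nhds 1 Set.univ Filter.univ_mem
  rw [Metric.mem_nhds_iff] at hK
  obtain ⟨ε, hε, hball⟩ := hK
  obtain ⟨m, hm⟩ := exists_w1_lt hε
  have hptK : ∀ i, pt m i ∈ K := by
    intro i
    apply hball
    rw [Metric.mem_ball, dist_comm, dist_one]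
    have hb := bset_N (m := (m:ℤ)) (Int.natCast_nonneg m) (pt_t m i) (fun k hk => by
      rw [pt_val]; exact if_neg (by omega))
    exact lt_of_le_of_lt hb hm
  have hsep : ∀ i j : ℕ, i ≠ j → w1 (m:ℤ) ≤ dist (pt m i) (pt m j) := by
    intro i j hij
    rw [dist_eq]
    have hval : ((pt m i)⁻¹ * pt m j).g.val (m:ℤ) ≠ 1 := by
      rw [mul_val_t0 (pt_t m i), pt_val, pt_val, if_pos rfl, if_pos rfl]
      intro hcon
      exact hij (FreeGroup.of_injective (inv_mul_eq_one.mp hcon))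
    have h2 : Wt (((pt m i)⁻¹ * pt m j)).t (m:ℤ) ≤ Nn ((pt m i)⁻¹ * pt m j) :=
      le_trans (le_Phi (Wt_le_five _) hval) (Phi_le_Nn _)
    have ht : (((pt m i)⁻¹ * pt m j)).t = 0 := rfl
    rw [ht] at h2
    exact le_trans (Wt_zero_ge _) h2
  have htb := hKc.totallyBounded
  rw [Metric.totallyBounded_iff] at htb
  obtain ⟨t, htf, htcov⟩ := htb (w1 (m:ℤ) / 2) (by linarith [w1_pos (m:ℤ)])
  have hch : ∀ i : ℕ, ∃ y ∈ t, pt m i ∈ Metric.ball y (w1 (m:ℤ) / 2) := by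
    intro i
    have h3 := htcov (hptK i)
    simpa using h3
  choose ctr hctr hball2 using hch
  obtain ⟨i, -, j, -, hij, hcij⟩ :=
    Set.infinite_univ.exists_ne_map_eq_of_mapsTo (f := ctr) (fun i _ => hctr i) htf
  have h1 := Metric.mem_ball.mp (hball2 i)
  have h2 := Metric.mem_ball.mp (hball2 j)
  have h4 := hsep i j hij
  have h5 : dist (pt m i) (pt m j) ≤ dist (pt m i) (ctr i) + dist (ctr j) (pt m j) := by
    rw [hcij]
    exact dist_triangle _ _ _
  rw [dist_comm (ctr j)] at h5
  linarith

/-! ## The free subgroup at 1 -/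

def pih (k : ℤ) : FreeGroup ℕ →* FreeGroup ℕ :=
  FreeGroup.lift (fun n => if (n:ℤ) ≤ k then FreeGroup.of n else 1)

lemma pih_of (k : ℤ) (n : ℕ) :
    pih k (FreeGroup.of n) = if (n:ℤ) ≤ k then FreeGroup.of n else 1 :=
  FreeGroup.lift_apply_of

lemma pih_neg {k : ℤ} (hk : k < 0) (w : FreeGroup ℕ) : pih k w = 1 := by
  refine FreeGroup.induction_on (C := fun w => pih k w = 1) w (map_one _)
    (fun x => ?_) (fun x hx => ?_) (fun x y hx hy => ?_)
  · show pih k (FreeGroup.of x) = 1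
    rw [pih_of, if_neg (by omega)]
  · have hx' : pih k (FreeGroup.of x) = 1 := hx
    show pih k ((FreeGroup.of x)⁻¹) = 1
    rw [map_inv, hx', inv_one]
  · have hx' : pih k x = 1 := hx
    have hy' : pih k y = 1 := hy
    show pih k (x * y) = 1
    rw [map_mul, hx', hy', one_mul]

lemma pih_high (w : FreeGroup ℕ) : ∃ k₀ : ℤ, ∀ k ≥ k₀, pih k w = w := by
  refine FreeGroup.induction_on (C := fun w => ∃ k₀ : ℤ, ∀ k ≥ k₀, pih k w = w) w
    ⟨0, fun k _ => map_one _⟩ (fun x => ?_) (fun x hx => ?_) (fun x y hx hy => ?_)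
  · refine ⟨(x:ℤ), fun k hk => ?_⟩
    show pih k (FreeGroup.of x) = FreeGroup.of x
    rw [pih_of, if_pos hk]
  · obtain ⟨k₀, hk₀⟩ := hx
    have hk₀' : ∀ k ≥ k₀, pih k (FreeGroup.of x) = FreeGroup.of x := hk₀
    refine ⟨k₀, fun k hk => ?_⟩
    show pih k ((FreeGroup.of x)⁻¹) = (FreeGroup.of x)⁻¹
    rw [map_inv, hk₀' k hk]
  · obtain ⟨k₀, h₀⟩ := hx
    obtain ⟨k₁, h₁⟩ := hy
    refine ⟨max k₀ k₁, fun k hk => ?_⟩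
    show pih k (x * y) = x * y
    rw [map_mul, h₀ k (le_trans (le_max_left _ _) hk), h₁ k (le_trans (le_max_right _ _) hk)]

def Gam (w : FreeGroup ℕ) : ℤ → F := fun k => pih k w

lemma Gam_mem (w : FreeGroup ℕ) : Gam w ∈ L := ⟨0, fun k hk => pih_neg hk w⟩

def phiH : FreeGroup ℕ →* GG where
  toFun w := ⟨⟨Gam w, Gam_mem w⟩, 0⟩
  map_one' := by
    refine GG.ext' ?_ rfl
    apply Subtype.ext
    funext k
    show pih k 1 = 1
    exact map_one _
  map_mul' w w' := by
    refine GG.ext' ?_ (by norm_num)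
    apply Subtype.ext
    funext k
    show pih k (w * w') = pih k w * pih (k - 0) w'
    rw [map_mul, sub_zero]

lemma phiH_t (w : FreeGroup ℕ) : (phiH w).t = 0 := rfl
lemma phiH_val (w : FreeGroup ℕ) (k : ℤ) : (phiH w).g.val k = pih k w := rfl

lemma phiH_inj : Function.Injective phiH := by
  rw [injective_iff_map_eq_one]
  intro w hw
  have h1 : ∀ k, pih k w = 1 := fun k => congrFun (congrArg (fun x : GG => x.g.val) hw) k
  obtain ⟨k₀, hk₀⟩ := pih_high w
  rw [← hk₀ k₀ le_rfl]
  exact h1 k₀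

def gseq (n : ℕ) : GG := phiH (FreeGroup.of n)

lemma gseq_tendsto : Filter.Tendsto gseq Filter.atTop (nhds 1) := by
  rw [Metric.tendsto_atTop]
  intro ε hε
  obtain ⟨n₀, hn₀⟩ := exists_w1_lt hε
  refine ⟨n₀, fun n hn => ?_⟩
  rw [dist_comm, dist_one]
  have hb := bset_N (m := (n:ℤ)) (x := gseq n) (Int.natCast_nonneg n) rfl (fun k hk => by
    show pih k (FreeGroup.of n) = 1
    rw [pih_of]; exact if_neg (by omega))
  have hmono : w1 (n:ℤ) ≤ w1 (n₀:ℤ) := w1_anti (by exact_mod_cast hn)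
  exact lt_of_le_of_lt (le_trans hb hmono) hn₀

lemma mem_clos {n : ℕ} {x : GG} (hx : x ∈ Subgroup.closure (gseq '' Set.Iic n)) :
    ∃ w, x = phiH w ∧ pih (n:ℤ) w = w := by
  refine Subgroup.closure_induction ?_ ?_ ?_ ?_ hx
  · rintro x ⟨i, hi, rfl⟩
    refine ⟨FreeGroup.of i, rfl, ?_⟩
    rw [pih_of, if_pos (by exact_mod_cast hi)]
  · exact ⟨1, (map_one _).symm, map_one _⟩
  · rintro x y hx' hy' ⟨w, rfl, hw⟩ ⟨w', rfl, hw'⟩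
    exact ⟨w * w', (map_mul _ _ _).symm, by rw [map_mul, hw, hw']⟩
  · rintro x hx' ⟨w, rfl, hw⟩
    exact ⟨w⁻¹, (map_inv _ _).symm, by rw [map_inv, hw]⟩

lemma discrete_clos (n : ℕ) :
    DiscreteTopology (Subgroup.closure (gseq '' Set.Iic n) : Subgroup GG) := by
  rw [discreteTopology_iff_isOpen_singleton]
  intro a
  have hset : ({a} : Set (Subgroup.closure (gseq '' Set.Iic n))) =
      Subtype.val ⁻¹' Metric.ball (a : GG) (w1 (n:ℤ)) := by
    ext y
    simp only [Set.mem_singleton_iff, Set.mem_preimage, Metric.mem_ball]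
    constructor
    · rintro rfl
      rw [dist_self]
      exact w1_pos _
    · intro hy
      have hz : ((y : GG))⁻¹ * (a : GG) ∈ Subgroup.closure (gseq '' Set.Iic n) :=
        mul_mem (inv_mem y.2) a.2
      obtain ⟨w, hw, hwfix⟩ := mem_clos hz
      by_cases hone : w = 1
      · have h1 : ((y:GG))⁻¹ * (a:GG) = 1 := by rw [hw, hone, map_one]
        have h2 : (a:GG) = (y:GG) := by
          have h3 : (y:GG) * (((y:GG))⁻¹ * (a:GG)) = (a:GG) := by group
          rw [h1, mul_one] at h3
          exact h3.symm
        exact Subtype.ext h2.symm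
      · exfalso
        have hval : ((y:GG)⁻¹ * (a:GG)).g.val (n:ℤ) ≠ 1 := by
          rw [hw, phiH_val, hwfix]
          exact hone
        have ht : (((y:GG))⁻¹ * (a:GG)).t = 0 := by rw [hw]; exact phiH_t w
        have h2 : Wt ((((y:GG))⁻¹ * (a:GG))).t (n:ℤ) ≤ Nn (((y:GG))⁻¹ * (a:GG)) :=
          le_trans (le_Phi (Wt_le_five _) hval) (Phi_le_Nn _)
        rw [ht] at h2
        have h3 : w1 (n:ℤ) ≤ Nn (((y:GG))⁻¹ * (a:GG)) := le_trans (Wt_zero_ge _) h2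
        rw [dist_eq] at hy
        linarith
  rw [hset]
  exact Metric.isOpen_ball.preimage continuous_subtype_val

/-! ## The open subgroup with shrinking conjugates -/

def U0 : Subgroup GG where
  carrier := {x : GG | x.t = 0 ∧ ∀ k < 0, x.g.val k = 1}
  one_mem' := ⟨rfl, fun _ _ => rfl⟩
  mul_mem' := by
    rintro x y ⟨hxt, hxg⟩ ⟨hyt, hyg⟩
    refine ⟨by simp [hxt, hyt], fun k hk => ?_⟩
    simp only [GG.mul_g, Lval_mul, shL_val, hxt]
    rw [hxg k hk, hyg (k - 0) (by omega), one_mul]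
  inv_mem' := by
    rintro x ⟨hxt, hxg⟩
    refine ⟨by simp [hxt], fun k hk => ?_⟩
    simp only [GG.inv_g, GG.inv_t, Lval_inv, shL_val, hxt]
    rw [hxg (k - -0) (by omega), inv_one]

lemma U0_open : IsOpen (U0 : Set GG) := by
  rw [Metric.isOpen_iff]
  intro x hx
  refine ⟨1, one_pos, fun y hy => ?_⟩
  have h1 : Nn (x⁻¹ * y) < w1 0 := by
    rw [w1_eq_one le_rfl]
    rw [Metric.mem_ball, dist_comm, dist_eq] at hy
    exact hy
  obtain ⟨ht, hg⟩ := N_bset h1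
  have hu : (x⁻¹ * y) ∈ U0 := ⟨ht, fun k hk => hg k (by omega)⟩
  have h2 : y = x * (x⁻¹ * y) := by group
  rw [h2]
  exact mul_mem hx hu

lemma conj_basis : ∀ W ∈ nhds (1:GG), ∃ f : GG,
    {y : GG | ∃ u ∈ U0, y = f * u * f⁻¹} ⊆ W := by
  intro W hW
  rw [Metric.mem_nhds_iff] at hW
  obtain ⟨ε, hε, hball⟩ := hW
  obtain ⟨m, hm⟩ := exists_w1_lt hε
  refine ⟨⟨1, (m:ℤ)⟩, ?_⟩
  rintro y ⟨u, ⟨hut, hug⟩, rfl⟩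
  apply hball
  rw [Metric.mem_ball, dist_comm, dist_one]
  have hft : (⟨1, (m:ℤ)⟩ : GG).t = (m:ℤ) := rfl
  have hc := conj_norm ⟨1, (m:ℤ)⟩ u 0 (by rw [hft]; positivity) hut (fun k hk => hug k hk)
  rw [hft, zero_add] at hc
  exact lt_of_le_of_lt hc hm

end St13

open St13 in
/-- There exists a Polish group `G` such that: (i) `G` is not locally compact;
(ii) `G` admits a compatible complete left-invariant metric (`G` is Weil complete); (iii) `G` has
a free subgroup at `1`: a sequence `(gₙ)` converging to `1` which freely generates a non-abelian
free subgroup and such that each subgroup generated by `g₀, …, gₙ` is discrete; and (iv) `G` has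
an open subgroup `U` whose conjugates `f U f⁻¹` form a neighbourhood basis at the identity. -/
theorem statement13 :
    ∃ (G : Type) (_ : Group G) (_ : TopologicalSpace G) (_ : IsTopologicalGroup G)
      (_ : PolishSpace G),
      (¬ LocallyCompactSpace G) ∧
      (∃ d : G → G → ℝ,
        (∀ x y : G, d x y = d y x) ∧
        (∀ x y : G, d x y = 0 ↔ x = y) ∧
        (∀ x y z : G, d x z ≤ d x y + d y z) ∧
        (∀ g x y : G, d (g * x) (g * y) = d x y) ∧
        (∀ s : Set G, IsOpen s ↔ ∀ x ∈ s, ∃ ε > 0, ∀ y : G, d x y < ε → y ∈ s) ∧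
        (∀ u : ℕ → G, (∀ ε : ℝ, 0 < ε → ∃ N : ℕ, ∀ m ≥ N, ∀ n ≥ N, d (u m) (u n) < ε) →
          ∃ g : G, Filter.Tendsto u Filter.atTop (nhds g))) ∧
      (∃ g : ℕ → G,
        Filter.Tendsto g Filter.atTop (nhds 1) ∧
        (∃ φ : FreeGroup ℕ →* G, Function.Injective φ ∧ ∀ n : ℕ, φ (FreeGroup.of n) = g n) ∧
        (∀ n : ℕ, DiscreteTopology (Subgroup.closure (g '' Set.Iic n) : Subgroup G))) ∧
      (∃ U : Subgroup G, IsOpen (U : Set G) ∧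
        ∀ W ∈ nhds (1 : G), ∃ f : G, { y : G | ∃ u ∈ U, y = f * u * f⁻¹ } ⊆ W) := by
  refine ⟨GG, inferInstance, inferInstance, inferInstance, inferInstance,
    not_locally_compact, ?_, ?_, ⟨U0, U0_open, conj_basis⟩⟩
  · refine ⟨dist, dist_comm, fun x y => dist_eq_zero, dist_triangle, dist_left_inv, ?_, ?_⟩
    · intro s
      constructor
      · intro hs x hx
        obtain ⟨ε, hε, hball⟩ := Metric.isOpen_iff.mp hs x hx
        exact ⟨ε, hε, fun y hy => hball (by rw [Metric.mem_ball, dist_comm]; exact hy)⟩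
      · intro hs
        rw [Metric.isOpen_iff]
        intro x hx
        obtain ⟨ε, hε, h⟩ := hs x hx
        exact ⟨ε, hε, fun y hy => h y (by rw [dist_comm]; exact Metric.mem_ball.mp hy)⟩
    · intro u hc
      exact cauchySeq_tendsto_of_complete (Metric.cauchySeq_iff.mpr hc)
  · exact ⟨gseq, gseq_tendsto, ⟨phiH, phiH_inj, fun n => rfl⟩, discrete_clos⟩
end
end

section
/- Let G be a Polish group which admits a compatible complete left-invariant metric (i.e., G is Weil complete) and which is not locally compact. Then there are open sets V₀ ⊇ V₁ ⊇ V₂ ⊇ … , each containing the identity, such that for every sequence (Fₙ) of finite subsets of G, G ≠ ⋃ₙ Fₙ Vₙ. -/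
open Pointwise

/-- Let `G` be a Polish group admitting a compatible complete left-invariant
metric (Weil complete) and not locally compact. Then there are open sets
`V₀ ⊇ V₁ ⊇ V₂ ⊇ …`, each containing the identity, such that for every sequence `(Fₙ)` of finite
subsets of `G`, `G ≠ ⋃ₙ Fₙ Vₙ`. -/
theorem statement14 {G : Type*} [Group G] [TopologicalSpace G] [IsTopologicalGroup G]
    [PolishSpace G]
    (d : G → G → ℝ)
    (hsymm : ∀ x y : G, d x y = d y x)
    (hzero : ∀ x y : G, d x y = 0 ↔ x = y)
    (htri : ∀ x y z : G, d x z ≤ d x y + d y z)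
    (hinv : ∀ g x y : G, d (g * x) (g * y) = d x y)
    (hcompat : ∀ s : Set G, IsOpen s ↔ ∀ x ∈ s, ∃ ε > 0, ∀ y : G, d x y < ε → y ∈ s)
    (hcomplete : ∀ u : ℕ → G,
      (∀ ε : ℝ, 0 < ε → ∃ N : ℕ, ∀ m ≥ N, ∀ n ≥ N, d (u m) (u n) < ε) →
      ∃ g : G, Filter.Tendsto u Filter.atTop (nhds g))
    (hnlc : ¬ LocallyCompactSpace G) :
    ∃ V : ℕ → Set G,
      (∀ n : ℕ, IsOpen (V n) ∧ (1 : G) ∈ V n) ∧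
      (∀ n : ℕ, V (n + 1) ⊆ V n) ∧
      (∀ F : ℕ → Set G, (∀ n, (F n).Finite) → (⋃ n : ℕ, F n * V n) ≠ Set.univ) := by
  classical
  -- Install the metric space structure coming from `d`.
  letI M : MetricSpace G := MetricSpace.ofDistTopology d
    (fun x => (hzero x x).mpr rfl) hsymm htri hcompat (fun x y h => (hzero x y).mp h)
  have hdist : ∀ x y : G, dist x y = d x y := fun _ _ => rfl
  -- completeness
  haveI : CompleteSpace G := Metric.complete_of_cauchySeq_tendsto (by
    intro u hu
    exact hcomplete u (fun ε hε => Metric.cauchySeq_iff.mp hu ε hε))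
  -- balls around 1 are not totally bounded
  have hTB : ∀ ε : ℝ, 0 < ε → ¬ TotallyBounded (Metric.ball (1 : G) ε) := by
    intro ε hε h
    apply hnlc
    have hc : IsCompact (closure (Metric.ball (1 : G) ε)) :=
      isCompact_iff_totallyBounded_isComplete.mpr
        ⟨h.closure, isClosed_closure.isComplete⟩
    exact hc.locallyCompactSpace_of_mem_nhds_of_group
      (Filter.mem_of_superset (Metric.ball_mem_nhds _ hε) subset_closure)
  -- separation: for each r > 0 there is δ with 0 < δ ≤ r such that no finite family of
  -- δ-balls covers the ball of radius r around 1.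
  have hsep : ∀ r : ℝ, 0 < r → ∃ δ : ℝ, 0 < δ ∧ δ ≤ r ∧
      ∀ t : Set G, t.Finite → ¬ (Metric.ball (1 : G) r ⊆ ⋃ f ∈ t, Metric.ball f δ) := by
    intro r hr
    have h := hTB r hr
    rw [Metric.totallyBounded_iff] at h
    push_neg at h
    obtain ⟨ε, hε, hcov⟩ := h
    refine ⟨min ε r, lt_min hε hr, min_le_right _ _, ?_⟩
    intro t ht hsub
    exact (hcov t ht (hsub.trans (Set.iUnion₂_mono fun f _ =>
      Metric.ball_subset_ball (min_le_left _ _)))).elim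
  choose! δ hδpos hδle hδ using hsep
  -- the radii
  set R : ℕ → ℝ := fun n => Nat.rec 1 (fun _ r => δ (r / 2) / 4) n with hRdef
  have hR0 : R 0 = 1 := rfl
  have hRs : ∀ n, R (n + 1) = δ (R n / 2) / 4 := fun n => rfl
  have hRpos : ∀ n, 0 < R n := by
    intro n
    induction n with
    | zero => norm_num [hR0]
    | succ n ih => rw [hRs]; have := hδpos (R n / 2) (by linarith); linarith
  have hRstep : ∀ n, R (n + 1) ≤ R n / 8 := by
    intro n
    have h1 := hδle (R n / 2) (by have := hRpos n; linarith)
    rw [hRs]; linarith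
  refine ⟨fun n => Metric.ball (1 : G) (R (n + 1)), ?_, ?_, ?_⟩
  · exact fun n => ⟨Metric.isOpen_ball, Metric.mem_ball_self (hRpos (n + 1))⟩
  · intro n
    exact Metric.ball_subset_ball (by have := hRstep (n + 1); have := hRpos (n + 1); linarith)
  intro F hF hcov
  -- one step of the construction
  have step : ∀ (n : ℕ) (z : G), ∃ y : G, dist y z < R n / 2 ∧
      ∀ f ∈ F n, δ (R n / 2) ≤ dist y f := by
    intro n z
    have hfin : ((fun f => z⁻¹ * f) '' (F n)).Finite := (hF n).image _
    have hns := hδ (R n / 2) (by have := hRpos n; linarith) _ hfin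
    rw [Set.not_subset] at hns
    obtain ⟨p, hp, hpn⟩ := hns
    refine ⟨z * p, ?_, ?_⟩
    · have h' : dist (z * p) z = dist p 1 := by
        rw [hdist, hdist]
        calc d (z * p) z = d (z * p) (z * 1) := by rw [mul_one]
        _ = d p 1 := hinv z p 1
      rw [Metric.mem_ball] at hp
      rw [h']; exact hp
    · intro f hf
      by_contra hlt
      push_neg at hlt
      apply hpn
      refine Set.mem_biUnion (Set.mem_image_of_mem _ hf) ?_
      rw [Metric.mem_ball]
      have e : dist p (z⁻¹ * f) = dist (z * p) f := by
        rw [hdist, hdist, ← hinv z p (z⁻¹ * f), mul_inv_cancel_left]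
      rw [e]; exact hlt
  -- the sequence of points
  set x : ℕ → G := fun n => Nat.rec 1 (fun n z => Classical.choose (step n z)) n with hxdef
  have hx : ∀ n, dist (x (n + 1)) (x n) < R n / 2 ∧
      ∀ f ∈ F n, δ (R n / 2) ≤ dist (x (n + 1)) f := by
    intro n
    exact Classical.choose_spec (step n (x n))
  -- telescoping estimate
  have claim : ∀ m k, dist (x k) (x (k + m)) ≤ 2 / 3 * R k := by
    intro m
    induction m with
    | zero => intro k; simp only [Nat.add_zero, dist_self]; have := hRpos k; linarith
    | succ m ih =>
      intro k
      have h1 := (hx k).1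
      have h2 := ih (k + 1)
      have h3 : k + (m + 1) = (k + 1) + m := by omega
      have h4 := hRstep k
      calc dist (x k) (x (k + (m + 1)))
          ≤ dist (x k) (x (k + 1)) + dist (x (k + 1)) (x ((k + 1) + m)) := by
            rw [h3]; exact dist_triangle _ _ _
        _ ≤ R k / 2 + 2 / 3 * R (k + 1) := by
            rw [dist_comm] at h1; linarith
        _ ≤ 2 / 3 * R k := by have := hRpos k; linarith
  -- R n → 0
  have hRle : ∀ n, R n ≤ (1 / 2) ^ n := by
    intro n
    induction n with
    | zero => simp [hR0]
    | succ n ih =>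
      have := hRstep n
      have hp := hRpos n
      calc R (n + 1) ≤ R n / 8 := this
        _ ≤ (1 / 2) ^ n / 2 := by linarith
        _ = (1 / 2) ^ (n + 1) := by ring
  -- Cauchy, limit g
  obtain ⟨g, hg⟩ := hcomplete x (by
    intro ε hε
    obtain ⟨N, hN⟩ := exists_pow_lt_of_lt_one (show (0:ℝ) < 3 / 4 * ε by linarith)
      (show (1:ℝ) / 2 < 1 by norm_num)
    refine ⟨N, fun m hm n hn => ?_⟩
    have h1 : dist (x N) (x m) ≤ 2 / 3 * R N := by
      have := claim (m - N) N
      rwa [Nat.add_sub_cancel' hm] at this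
    have h2 : dist (x N) (x n) ≤ 2 / 3 * R N := by
      have := claim (n - N) N
      rwa [Nat.add_sub_cancel' hn] at this
    have h3 : dist (x m) (x n) ≤ dist (x m) (x N) + dist (x N) (x n) := dist_triangle _ _ _
    rw [dist_comm (x m) (x N)] at h3
    have h4 := hRle N
    rw [← hdist]
    linarith)
  -- distance from limit to x (n+1)
  have hgx : ∀ n, dist g (x (n + 1)) ≤ 2 / 3 * R (n + 1) := by
    intro n
    have htend : Filter.Tendsto (fun m => dist (x (n + 1)) (x (m + (n + 1))))
        Filter.atTop (nhds (dist (x (n + 1)) g)) :=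
      Filter.Tendsto.dist tendsto_const_nhds (hg.comp (Filter.tendsto_add_atTop_nat (n + 1)))
    have := le_of_tendsto htend (Filter.Eventually.of_forall fun m => by
      rw [add_comm m (n + 1)]; exact claim m (n + 1))
    rwa [dist_comm] at this
  -- g lies in the union, derive contradiction
  have hgmem : g ∈ ⋃ n : ℕ, F n * Metric.ball (1 : G) (R (n + 1)) := hcov ▸ Set.mem_univ g
  obtain ⟨s, ⟨n, rfl⟩, hgs⟩ := hgmem
  obtain ⟨f, hf, v, hv, rfl⟩ := hgs
  -- dist g f < R (n+1)
  have h1 : dist (f * v) f < R (n + 1) := by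
    rw [hdist]
    calc d (f * v) f = d (f * v) (f * 1) := by rw [mul_one]
      _ = d v 1 := hinv f v 1
    rw [Metric.mem_ball, hdist] at hv
    rwa [← hdist, dist_comm] at hv ⊢
  -- but dist g f ≥ δ (R n / 2) - 2/3 R (n+1) = 4 R(n+1) - 2/3 R(n+1)
  have h2 := (hx n).2 f hf
  have h3 := hgx n
  have h4 : dist (x (n + 1)) f ≤ dist (x (n + 1)) (f * v) + dist (f * v) f := dist_triangle _ _ _
  rw [dist_comm (x (n + 1)) (f * v)] at h4
  have h5 : δ (R n / 2) = 4 * R (n + 1) := by rw [hRs]; ring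
  have h6 := hRpos (n + 1)
  rw [h5] at h2
  linarith
end

section
/- Let G be a non-discrete Polish group such that the set A = {g ∈ G : 1 belongs to the closure of the conjugacy class {fgf⁻¹ : f ∈ G}} is not comeagre in any open neighbourhood of 1 (i.e., for every open V ∋ 1, A ∩ V is not comeagre in V). Then there are open sets V₀ ⊇ V₁ ⊇ V₂ ⊇ … , each containing the identity, such that for all sequences (fₙ) and (gₙ) in G, G ≠ ⋃ₙ fₙ Vₙ gₙ. -/
open Set Filter Topology Metric

namespace Stmt15

variable {G : Type*} [Group G] [MetricSpace G] [IsTopologicalGroup G]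

/-- The set of elements some conjugate of which lies in the `1/(k+1)`-ball around `1`. -/
def Sat (G : Type*) [Group G] [MetricSpace G] (k : ℕ) : Set G :=
  {x : G | ∃ f : G, f * x * f⁻¹ ∈ ball (1 : G) (1 / (k + 1))}

lemma isOpen_Sat (k : ℕ) : IsOpen (Sat G k) := by
  have h : Sat G k = ⋃ f : G, (fun x : G => f * x * f⁻¹) ⁻¹' ball (1 : G) (1 / (k + 1)) := by
    ext x; simp [Sat]
  rw [h]
  exact isOpen_iUnion fun f =>
    isOpen_ball.preimage ((continuous_const.mul continuous_id).mul continuous_const)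

lemma rpos (k : ℕ) : (0 : ℝ) < 1 / (k + 1) := by positivity

lemma mem_A_iff (g : G) :
    ((1 : G) ∈ closure {h : G | ∃ f : G, h = f * g * f⁻¹}) ↔ ∀ k, g ∈ Sat G k := by
  constructor
  · intro h k
    rcases Metric.mem_closure_iff.1 h _ (rpos k) with ⟨b, ⟨f, rfl⟩, hb⟩
    exact ⟨f, by rwa [mem_ball, dist_comm]⟩
  · intro h
    refine Metric.mem_closure_iff.2 fun ε hε => ?_
    rcases exists_nat_one_div_lt hε with ⟨k, hk⟩
    rcases h k with ⟨f, hf⟩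
    refine ⟨f * g * f⁻¹, ⟨f, rfl⟩, ?_⟩
    rw [dist_comm]
    exact lt_trans (mem_ball.1 hf) hk

/-- The hypothesis of the theorem. -/
def HA (G : Type*) [Group G] [MetricSpace G] : Prop :=
  ∀ V : Set G, IsOpen V → (1 : G) ∈ V →
    ¬ IsMeagre (V \ {g : G | (1 : G) ∈ closure {h : G | ∃ f : G, h = f * g * f⁻¹}})

lemma exists_witness (hA : HA G) {S : Set G} (hS : IsOpen S) (h1 : (1 : G) ∈ S) :
    ∃ w ∈ S, ∃ k : ℕ, w ∉ closure (Sat G k) := by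
  by_contra hcon
  push_neg at hcon
  refine hA S hS h1 ?_
  have hsub : S \ {g : G | (1 : G) ∈ closure {h : G | ∃ f : G, h = f * g * f⁻¹}} ⊆
      ⋃ k : ℕ, (closure S \ Sat G k) := by
    rintro x ⟨hxS, hxA⟩
    rw [mem_setOf_eq, mem_A_iff] at hxA
    push_neg at hxA
    rcases hxA with ⟨k, hk⟩
    exact mem_iUnion.2 ⟨k, subset_closure hxS, hk⟩
  refine (isMeagre_iUnion fun k => ?_).mono hsub
  have hcl : IsClosed (closure S \ Sat G k) := isClosed_closure.sdiff (isOpen_Sat k)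
  have hint : interior (closure S \ Sat G k) = ∅ := by
    rw [eq_empty_iff_forall_notMem]
    intro x hx
    have hUo : IsOpen (interior (closure S \ Sat G k)) := isOpen_interior
    have hUsub := interior_subset (s := closure S \ Sat G k)
    have hxc : x ∈ closure S := (hUsub hx).1
    rcases mem_closure_iff.1 hxc _ hUo hx with ⟨y, hyU, hyS⟩
    have hycl : y ∈ closure (Sat G k) := hcon y hyS k
    rcases mem_closure_iff.1 hycl _ hUo hyU with ⟨z, hzU, hzS⟩
    exact (hUsub hzU).2 hzS
  rw [isMeagre_iff_countable_union_isNowhereDense]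
  refine ⟨{closure S \ Sat G k}, ?_, countable_singleton _, by simp⟩
  intro t ht
  rw [mem_singleton_iff] at ht
  subst ht
  rw [IsNowhereDense, hcl.closure_eq]
  exact hint

/-- The data carried along the inductive construction. -/
structure Data (G : Type*) [Group G] [MetricSpace G] where
  idx : ℕ
  N : Set G
  lev : Set G
  V : Set G
  hNo : IsOpen N
  hN1 : (1 : G) ∈ N
  hNs : N⁻¹ = N
  hVo : IsOpen V
  hV1 : (1 : G) ∈ V
  hVs : V⁻¹ = V
  hlevfin : lev.Finite

/-- One step of the construction. -/
structure Link (d d' : Data G) where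
  w : G
  k : ℕ
  hw : w ∈ d.N
  hwk : w ∉ closure (Sat G k)
  hVsub : d'.V ⊆ d.V
  hVW : ∀ a ∈ d'.V, ∀ b ∈ d'.V, a * b ∈ ball (1 : G) (1 / (k + 1))
  hclN : closure d'.N ⊆ d.N
  hwclN : ∀ x ∈ closure d'.N, w * x ∈ d.N
  hdodge : ∀ a ∈ d'.N, ∀ b ∈ d'.N, a * w * b ∉ closure (Sat G k)
  hlev : d'.lev = d.lev ∪ (· * w) '' d.lev
  hdiam : ∀ c ∈ d'.lev, ∀ x ∈ closure d'.N, dist (c * x) c ≤ (1 / 2) ^ d.idx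
  hidx : d'.idx = d.idx + 1

lemma step_exists (hA : HA G) (d : Data G) : Nonempty ((d' : Data G) × Link d d') := by
  obtain ⟨w, hwN, k, hwk⟩ := exists_witness hA d.hNo d.hN1
  -- the V part
  obtain ⟨V₀, hV₀o, hV₀1, hV₀m⟩ :=
    exists_open_nhds_one_mul_subset (ball_mem_nhds (1 : G) (rpos k))
  set V' : Set G := (V₀ ∩ V₀⁻¹) ∩ d.V with hV'def
  have hV'o : IsOpen V' := (hV₀o.inter hV₀o.inv).inter d.hVo
  have hV'1 : (1 : G) ∈ V' := ⟨⟨hV₀1, by simpa using hV₀1⟩, d.hV1⟩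
  have hV's : V'⁻¹ = V' := by
    rw [hV'def, Set.inter_inv, Set.inter_inv, inv_inv, d.hVs, Set.inter_comm V₀⁻¹ V₀]
  have hV'W : ∀ a ∈ V', ∀ b ∈ V', a * b ∈ ball (1 : G) (1 / (k + 1)) := fun a ha b hb =>
    hV₀m (mul_mem_mul ha.1.1 hb.1.1)
  -- the new level set
  set lev' : Set G := d.lev ∪ (· * w) '' d.lev with hlev'def
  have hlev'fin : lev'.Finite := d.hlevfin.union (d.hlevfin.image _)
  -- dodging margin around w
  have hO : IsOpen (closure (Sat G k))ᶜ := isClosed_closure.isOpen_compl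
  have hφ : Continuous fun p : G × G => p.1 * w * p.2 :=
    (continuous_fst.mul continuous_const).mul continuous_snd
  have h11 : ((1 : G), (1 : G)) ∈ (fun p : G × G => p.1 * w * p.2) ⁻¹'
      (closure (Sat G k))ᶜ := by simpa using hwk
  obtain ⟨u, v, huo, hvo, h1u, h1v, huv⟩ :=
    isOpen_prod_iff.1 (hO.preimage hφ) 1 1 h11
  -- closure containment
  set T : Set G := d.N ∩ (fun x : G => w * x) ⁻¹' d.N with hTdef
  have hTo : IsOpen T :=
    d.hNo.inter (d.hNo.preimage (continuous_const.mul continuous_id))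
  have hT1 : (1 : G) ∈ T := ⟨d.hN1, by simpa using hwN⟩
  obtain ⟨ε, hε, hball⟩ := Metric.mem_nhds_iff.1 (hTo.mem_nhds hT1)
  have hUbcl : closure (ball (1 : G) (ε / 2)) ⊆ T := by
    refine subset_trans closure_ball_subset_closedBall (subset_trans ?_ hball)
    exact closedBall_subset_ball (by linarith)
  -- diameter control
  set Uc : Set G := ⋂ c ∈ lev', (fun x : G => c * x) ⁻¹' ball c ((1 / 2) ^ d.idx) with hUcdef
  have hUco : IsOpen Uc := hlev'fin.isOpen_biInter fun c _ =>
    isOpen_ball.preimage (continuous_const.mul continuous_id)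
  have hUc1 : (1 : G) ∈ Uc := by
    refine mem_iInter₂.2 fun c _ => ?_
    simp only [mem_preimage, mul_one, mem_ball, dist_self]
    positivity
  set U : Set G := ((u ∩ v) ∩ ball (1 : G) (ε / 2)) ∩ Uc with hUdef
  have hUo : IsOpen U := (((huo.inter hvo).inter isOpen_ball).inter hUco)
  have hU1 : (1 : G) ∈ U :=
    ⟨⟨⟨h1u, h1v⟩, mem_ball_self (by linarith)⟩, hUc1⟩
  set N' : Set G := U ∩ U⁻¹ with hN'def
  have hN'o : IsOpen N' := hUo.inter hUo.inv
  have hN'1 : (1 : G) ∈ N' := ⟨hU1, by simpa using hU1⟩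
  have hN's : N'⁻¹ = N' := by
    rw [hN'def, Set.inter_inv, inv_inv, Set.inter_comm U⁻¹ U]
  have hN'Ub : N' ⊆ ball (1 : G) (ε / 2) := fun x hx => hx.1.1.2
  have hclN' : closure N' ⊆ T := subset_trans (closure_mono hN'Ub) hUbcl
  refine ⟨⟨⟨d.idx + 1, N', lev', V', hN'o, hN'1, hN's, hV'o, hV'1, hV's, hlev'fin⟩,
    { w := w, k := k, hw := hwN, hwk := hwk,
      hVsub := fun a ha => ha.2
      hVW := hV'W
      hclN := fun x hx => (hclN' hx).1
      hwclN := fun x hx => (hclN' hx).2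
      hdodge := by
        intro a ha b hb
        have : (a, b) ∈ u ×ˢ v := ⟨ha.1.1.1.1, hb.1.1.1.2⟩
        exact huv this
      hlev := hlev'def
      hdiam := by
        intro c hc x hx
        have hsub : N' ⊆ (fun x : G => c * x) ⁻¹' closedBall c ((1 / 2) ^ d.idx) := by
          intro y hy
          have := mem_iInter₂.1 hy.1.2 c hc
          exact ball_subset_closedBall this
        have hclosed : IsClosed ((fun x : G => c * x) ⁻¹' closedBall c ((1 / 2) ^ d.idx)) :=
          Metric.isClosed_closedBall.preimage (continuous_const.mul continuous_id)
        have := closure_minimal hsub hclosed hx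
        simpa [mem_closedBall] using this
      hidx := rfl }⟩⟩

noncomputable def step (hA : HA G) (d : Data G) : (d' : Data G) × Link d d' :=
  (step_exists hA d).some

noncomputable def d0 (G : Type*) [Group G] [MetricSpace G] : Data G :=
  { idx := 0, N := univ, lev := {1}, V := univ,
    hNo := isOpen_univ, hN1 := mem_univ _, hNs := by simp,
    hVo := isOpen_univ, hV1 := mem_univ _, hVs := by simp,
    hlevfin := finite_singleton _ }

noncomputable def packD (hA : HA G) (n : ℕ) : Data G :=
  Nat.rec (d0 G) (fun _ d => (step hA d).1) n

noncomputable def packL (hA : HA G) (n : ℕ) : Link (packD hA n) (packD hA (n + 1)) :=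
  (step hA (packD hA n)).2

lemma idx_packD (hA : HA G) : ∀ n, (packD hA n).idx = n
  | 0 => rfl
  | n + 1 => by
      have h := (packL hA n).hidx
      rw [h, idx_packD hA n]

end Stmt15

namespace Stmt15

variable {G : Type*} [Group G] [MetricSpace G] [IsTopologicalGroup G]

/-- the `n`-th covering set of the adversary -/
def K (hA : HA G) (f g : ℕ → G) (n : ℕ) : Set G :=
  (fun v : G => f n * v * g n) '' (packD hA (n + 1)).V

open Classical in
noncomputable def cseq (hA : HA G) (f g : ℕ → G) (n : ℕ) : G :=
  Nat.rec 1 (fun n c =>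
    if (∃ v ∈ (packD hA (n + 1)).N, c * v ∈ K hA f g n) then c * (packL hA n).w else c) n

open Classical in
lemma cseq_succ (hA : HA G) (f g : ℕ → G) (n : ℕ) :
    cseq hA f g (n + 1) =
      if (∃ v ∈ (packD hA (n + 1)).N, cseq hA f g n * v ∈ K hA f g n)
      then cseq hA f g n * (packL hA n).w else cseq hA f g n := rfl

lemma cseq_mem_lev (hA : HA G) (f g : ℕ → G) : ∀ n, cseq hA f g n ∈ (packD hA n).lev
  | 0 => by
      show (1 : G) ∈ ({1} : Set G)
      exact rfl
  | n + 1 => by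
      rw [cseq_succ, (packL hA n).hlev]
      split_ifs with h
      · exact Or.inr ⟨cseq hA f g n, cseq_mem_lev hA f g n, rfl⟩
      · exact Or.inl (cseq_mem_lev hA f g n)

lemma region_avoid (hA : HA G) (f g : ℕ → G) (n : ℕ) :
    ∀ v ∈ (packD hA (n + 1)).N, cseq hA f g (n + 1) * v ∉ K hA f g n := by
  have hc := cseq_succ hA f g n
  split_ifs at hc with h
  · -- dodged: moved to `c * w`
    rw [hc]
    rintro v hv hmem
    obtain ⟨v₁, hv₁N, hv₁K⟩ := h
    obtain ⟨a, haV, ha⟩ := hv₁K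
    obtain ⟨b, hbV, hb⟩ := hmem
    set c := cseq hA f g n
    set w := (packL hA n).w
    have e : v₁⁻¹ * w * v = (c * v₁)⁻¹ * (c * w * v) := by group
    have key : g n * (v₁⁻¹ * w * v) * (g n)⁻¹ = a⁻¹ * b := by
      rw [e, ← ha, ← hb]; group
    have ha' : a⁻¹ ∈ (packD hA (n + 1)).V := by
      rw [← (packD hA (n + 1)).hVs]
      simpa using haV
    have hSat : v₁⁻¹ * w * v ∈ Sat G (packL hA n).k :=
      ⟨g n, by rw [key]; exact (packL hA n).hVW a⁻¹ ha' b hbV⟩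
    have hv₁' : v₁⁻¹ ∈ (packD hA (n + 1)).N := by
      rw [← (packD hA (n + 1)).hNs]
      simpa using hv₁N
    exact (packL hA n).hdodge v₁⁻¹ hv₁' v hv (subset_closure hSat)
  · rw [hc]
    intro v hv hmem
    exact h ⟨v, hv, hmem⟩

lemma reg_step (hA : HA G) (f g : ℕ → G) (n : ℕ) :
    ∀ x ∈ closure (packD hA (n + 1)).N,
      ∃ y ∈ (packD hA n).N, cseq hA f g (n + 1) * x = cseq hA f g n * y := by
  intro x hx
  have hc := cseq_succ hA f g n
  split_ifs at hc with h
  · exact ⟨(packL hA n).w * x, (packL hA n).hwclN x hx, by rw [hc, mul_assoc]⟩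
  · exact ⟨x, (packL hA n).hclN hx, by rw [hc]⟩

lemma reg_mono (hA : HA G) (f g : ℕ → G) (n : ℕ) :
    ∀ m, n ≤ m → ∀ x ∈ closure (packD hA m).N,
      ∃ y ∈ closure (packD hA n).N, cseq hA f g m * x = cseq hA f g n * y := by
  intro m hm
  induction m, hm using Nat.le_induction with
  | base => exact fun x hx => ⟨x, hx, rfl⟩
  | succ m hm ih =>
      intro x hx
      obtain ⟨y', hy', he⟩ := reg_step hA f g m x hx
      obtain ⟨y, hy, he2⟩ := ih y' (subset_closure hy')
      exact ⟨y, hy, by rw [he, he2]⟩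

lemma dist_bound (hA : HA G) (f g : ℕ → G) (n m : ℕ) (h : n + 1 ≤ m) :
    dist (cseq hA f g m) (cseq hA f g (n + 1)) ≤ (1 / 2) ^ n := by
  obtain ⟨y, hy, heq⟩ :=
    reg_mono hA f g (n + 1) m h 1 (subset_closure (packD hA m).hN1)
  rw [mul_one] at heq
  have hd := (packL hA n).hdiam (cseq hA f g (n + 1)) (cseq_mem_lev hA f g (n + 1)) y hy
  rw [idx_packD hA n] at hd
  rw [heq]
  exact hd

lemma cauchy (hA : HA G) (f g : ℕ → G) : CauchySeq (cseq hA f g) := by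
  rw [Metric.cauchySeq_iff']
  intro ε hε
  obtain ⟨n, hn⟩ := exists_pow_lt_of_lt_one hε (by norm_num : (1 / 2 : ℝ) < 1)
  exact ⟨n + 1, fun m hm => lt_of_le_of_lt (dist_bound hA f g n m hm) hn⟩

lemma K_isOpen (hA : HA G) (f g : ℕ → G) (n : ℕ) : IsOpen (K hA f g n) := by
  have hm : IsOpenMap (fun v : G => f n * v * g n) := by
    have h1 : IsOpenMap (fun v : G => f n * v) := (Homeomorph.mulLeft (f n)).isOpenMap
    have h2 : IsOpenMap (fun v : G => v * g n) := (Homeomorph.mulRight (g n)).isOpenMap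
    have h3 := h2.comp h1
    exact h3
  exact hm _ (packD hA (n + 1)).hVo

lemma avoid (hA : HA G) (f g : ℕ → G) (x : G)
    (hx : Tendsto (cseq hA f g) atTop (𝓝 x)) (n : ℕ) : x ∉ K hA f g n := by
  set c := cseq hA f g (n + 1) with hcdef
  set Nn := (packD hA (n + 1)).N with hNndef
  have hclosed : IsClosed ((fun v : G => c * v) '' closure Nn) := by
    have := (Homeomorph.mulLeft c).isClosedMap (closure Nn) isClosed_closure
    simpa using this
  have hxmem : x ∈ (fun v : G => c * v) '' closure Nn := by
    refine hclosed.mem_of_tendsto hx (eventually_atTop.2 ⟨n + 1, fun m hm => ?_⟩)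
    obtain ⟨y, hy, heq⟩ :=
      reg_mono hA f g (n + 1) m hm 1 (subset_closure (packD hA m).hN1)
    rw [mul_one] at heq
    exact ⟨y, hy, heq.symm⟩
  have himg : (fun v : G => c * v) '' closure Nn = closure ((fun v : G => c * v) '' Nn) := by
    have := (Homeomorph.mulLeft c).image_closure Nn
    simpa using this
  have hdisj : (fun v : G => c * v) '' Nn ⊆ (K hA f g n)ᶜ := by
    rintro _ ⟨v, hv, rfl⟩
    exact region_avoid hA f g n v hv
  have hsub : closure ((fun v : G => c * v) '' Nn) ⊆ (K hA f g n)ᶜ :=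
    closure_minimal hdisj (K_isOpen hA f g n).isClosed_compl
  exact hsub (himg ▸ hxmem)

theorem main [CompleteSpace G] (hA : HA G) :
    ∃ V : ℕ → Set G,
      (∀ n : ℕ, IsOpen (V n) ∧ (1 : G) ∈ V n) ∧
      (∀ n : ℕ, V (n + 1) ⊆ V n) ∧
      (∀ f g : ℕ → G, (⋃ n : ℕ, (fun v : G => f n * v * g n) '' V n) ≠ Set.univ) := by
  refine ⟨fun n => (packD hA (n + 1)).V,
    fun n => ⟨(packD hA (n + 1)).hVo, (packD hA (n + 1)).hV1⟩,
    fun n => (packL hA (n + 1)).hVsub,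
    fun f g heq => ?_⟩
  obtain ⟨x, hx⟩ := cauchySeq_tendsto_of_complete (cauchy hA f g)
  have hxmem : x ∈ ⋃ n : ℕ, (fun v : G => f n * v * g n) '' (packD hA (n + 1)).V := by
    rw [heq]; exact mem_univ x
  obtain ⟨n, hn⟩ := mem_iUnion.1 hxmem
  exact avoid hA f g x hx n hn

end Stmt15

/-- Let `G` be a non-discrete Polish group such that the set
`A = {g : 1 ∈ closure (conjugacy class of g)}` is not comeagre in any open neighbourhood `V` of
`1` (for `V` open this means `V \ A` is not meagre). Then there are open sets
`V₀ ⊇ V₁ ⊇ V₂ ⊇ …`, each containing the identity, such that for all sequences `(fₙ)`, `(gₙ)` in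
`G`, `G ≠ ⋃ₙ fₙ Vₙ gₙ`. -/
theorem statement15 {G : Type*} [Group G] [TopologicalSpace G] [IsTopologicalGroup G]
    [PolishSpace G]
    (hnd : ¬ DiscreteTopology G)
    (hA : ∀ V : Set G, IsOpen V → (1 : G) ∈ V →
      ¬ IsMeagre (V \ { g : G | (1 : G) ∈ closure { h : G | ∃ f : G, h = f * g * f⁻¹ } })) :
    ∃ V : ℕ → Set G,
      (∀ n : ℕ, IsOpen (V n) ∧ (1 : G) ∈ V n) ∧
      (∀ n : ℕ, V (n + 1) ⊆ V n) ∧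
      (∀ f g : ℕ → G, (⋃ n : ℕ, (fun v : G => f n * v * g n) '' V n) ≠ Set.univ) := by
  letI := TopologicalSpace.upgradeIsCompletelyMetrizable G
  exact Stmt15.main hA
end
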